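/- Let M be an invertible r×r real matrix, I ⊆ [r] with |I| = a, J = [r]\I, and N = adj(M). Then (det [M]_I)·M^{−1} − Ext_I(adj [M]_I) = (det M)^{−(r−a−1)} · N · Ext_J(adj [N]_J) · M^{−1}, where [A]_K denotes the principal submatrix of A indexed by K, and Ext_K(B) denotes the r×r matrix whose K×K principal submatrix is B and all other entries are 0. -/

import Mathlib

open Matrix

/-- The principal submatrix of `A` on the index set `K`. -/
def restr {r : ℕ} (K : Finset (Fin r)) (A : Matrix (Fin r) (Fin r) ℝ) :
    Matrix K K ℝ :=
  A.submatrix Subtype.val Subtype.val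

/-- The extension of a `K × K` matrix to an `r × r` matrix by zeros. -/
def extM {r : ℕ} (K : Finset (Fin r)) (B : Matrix K K ℝ) :
    Matrix (Fin r) (Fin r) ℝ :=
  fun i j => if hi : i ∈ K then if hj : j ∈ K then B ⟨i, hi⟩ ⟨j, hj⟩ else 0 else 0

lemma block_key {m n : Type*} [Fintype m] [Fintype n] [DecidableEq m] [DecidableEq n]
    (A : Matrix m m ℝ) (B : Matrix m n ℝ) (C : Matrix n m ℝ) (D : Matrix n n ℝ)
    (hA : IsUnit A.det) (hW : IsUnit (fromBlocks A B C D).det) :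
    A.det • fromBlocks A B C D
        - fromBlocks A B C D * fromBlocks A.adjugate 0 0 0 * fromBlocks A B C D
      = (fromBlocks A B C D).det •
          fromBlocks 0 0 0 (((fromBlocks A B C D)⁻¹.toBlocks₂₂).adjugate) := by
  set W := fromBlocks A B C D with hWdef
  have iA : Invertible A := A.invertibleOfIsUnitDet hA
  set P := W⁻¹.toBlocks₁₁
  set Q := W⁻¹.toBlocks₁₂
  set R := W⁻¹.toBlocks₂₁
  set T := W⁻¹.toBlocks₂₂ with hTdef
  have hWi : W⁻¹ = fromBlocks P Q R T := (fromBlocks_toBlocks _).symm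
  have h1 : W * W⁻¹ = 1 := mul_nonsing_inv _ hW
  have h2 : W⁻¹ * W = 1 := nonsing_inv_mul _ hW
  rw [hWi, hWdef, fromBlocks_multiply, ← fromBlocks_one] at h1 h2
  have hAQ : A * Q + B * T = 0 := by
    have := congrArg Matrix.toBlocks₁₂ h1
    simpa only [Matrix.toBlocks_fromBlocks₁₂] using this
  have hCQ : C * Q + D * T = 1 := by
    have := congrArg Matrix.toBlocks₂₂ h1
    simpa only [Matrix.toBlocks_fromBlocks₂₂] using this
  have hRA : R * A + T * C = 0 := by
    have := congrArg Matrix.toBlocks₂₁ h2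
    simpa only [Matrix.toBlocks_fromBlocks₂₁] using this
  have hRB : R * B + T * D = 1 := by
    have := congrArg Matrix.toBlocks₂₂ h2
    simpa only [Matrix.toBlocks_fromBlocks₂₂] using this
  set S : Matrix n n ℝ := D - C * A⁻¹ * B with hSdef
  have hQ : Q = -(A⁻¹ * B * T) := by
    have h := congrArg (fun X => A⁻¹ * X) hAQ
    simp only [Matrix.mul_add, ← Matrix.mul_assoc, Matrix.nonsing_inv_mul _ hA,
      Matrix.mul_zero, Matrix.one_mul] at h
    exact eq_neg_of_add_eq_zero_left h
  have hR : R = -(T * C * A⁻¹) := by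
    have h := congrArg (fun X => X * A⁻¹) hRA
    simp only [Matrix.add_mul, Matrix.mul_assoc, Matrix.mul_nonsing_inv _ hA,
      Matrix.zero_mul, Matrix.mul_one] at h
    have h' := eq_neg_of_add_eq_zero_left h
    simpa only [Matrix.mul_assoc] using h'
  have hST : S * T = 1 := by
    rw [hQ] at hCQ
    rw [hSdef, Matrix.sub_mul]
    simp only [Matrix.mul_neg, neg_add_eq_sub, Matrix.mul_assoc] at hCQ ⊢
    exact hCQ
  have hTS : T * S = 1 := by
    rw [hR] at hRB
    rw [hSdef, Matrix.mul_sub]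
    simp only [Matrix.neg_mul, neg_add_eq_sub, Matrix.mul_assoc] at hRB ⊢
    exact hRB
  have hdetW : W.det = A.det * S.det := by
    rw [hWdef, det_fromBlocks₁₁, invOf_eq_nonsing_inv _]
  have hdetTS : T.det * S.det = 1 := by rw [← det_mul, hTS, det_one]
  have hTinv : T⁻¹ = S := inv_eq_right_inv hTS
  have hdetT : IsUnit T.det := IsUnit.of_mul_eq_one _ hdetTS
  have hadjT : T.adjugate = T.det • S := by
    rw [← hTinv, Matrix.inv_def, smul_smul, Ring.inverse_eq_inv',
      mul_inv_cancel₀ hdetT.ne_zero, one_smul]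
  have hadjA : A.adjugate = A.det • A⁻¹ := by
    rw [Matrix.inv_def, smul_smul, Ring.inverse_eq_inv',
      mul_inv_cancel₀ hA.ne_zero, one_smul]
  have key : W.det • T.adjugate = A.det • D - C * A.adjugate * B := by
    rw [hadjT, hdetW, smul_smul, mul_assoc, mul_comm S.det T.det, hdetTS, mul_one,
      hSdef, smul_sub, hadjA]
    rw [Matrix.mul_smul, Matrix.smul_mul]
  have hWFW : W * fromBlocks A.adjugate 0 0 0 * W
      = fromBlocks (A.det • A) (A.det • B) (A.det • C) (C * A.adjugate * B) := by
    rw [hWdef, fromBlocks_multiply, fromBlocks_multiply]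
    refine fromBlocks_inj.mpr ⟨?_, ?_, ?_, ?_⟩
    · simp [Matrix.mul_adjugate, Matrix.smul_mul]
    · simp [Matrix.mul_adjugate, Matrix.smul_mul]
    · simp [Matrix.mul_assoc, Matrix.adjugate_mul, mul_smul_comm]
    · simp [Matrix.mul_assoc]
  rw [hWFW, hWdef, fromBlocks_smul, fromBlocks_smul, key]
  ext (i | i) (j | j) <;> simp [Matrix.sub_apply]

def esum {r : ℕ} (I : Finset (Fin r)) : (↥I ⊕ ↥(Iᶜ)) ≃ Fin r where
  toFun := Sum.elim Subtype.val Subtype.val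
  invFun x := if h : x ∈ I then Sum.inl ⟨x, h⟩ else Sum.inr ⟨x, Finset.mem_compl.mpr h⟩
  left_inv := by
    rintro (⟨x, hx⟩ | ⟨x, hx⟩)
    · simp [hx]
    · simp [Finset.mem_compl.mp hx]
  right_inv := by
    intro x
    by_cases h : x ∈ I <;> simp [h]

lemma reindex_esum (M : Matrix (Fin r) (Fin r) ℝ) (I : Finset (Fin r)) :
    reindex (esum I).symm (esum I).symm M
      = fromBlocks (restr I M) (M.submatrix Subtype.val Subtype.val)
          (M.submatrix Subtype.val Subtype.val) (restr Iᶜ M) := by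
  ext (i | i) (j | j) <;> rfl

lemma toBlocks₁₁_reindex_esum (M : Matrix (Fin r) (Fin r) ℝ) (I : Finset (Fin r)) :
    (reindex (esum I).symm (esum I).symm M).toBlocks₁₁ = restr I M := rfl

lemma toBlocks₂₂_reindex_esum (M : Matrix (Fin r) (Fin r) ℝ) (I : Finset (Fin r)) :
    (reindex (esum I).symm (esum I).symm M).toBlocks₂₂ = restr Iᶜ M := rfl

lemma reindex_esum_extM (I : Finset (Fin r)) (B : Matrix I I ℝ) :
    reindex (esum I).symm (esum I).symm (extM I B) = fromBlocks B 0 0 0 := by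
  ext (i | i) (j | j)
  · simp [extM, esum, i.2, j.2]
  · simp [extM, esum, Finset.mem_compl.mp j.2]
  · simp [extM, esum, Finset.mem_compl.mp i.2]
  · simp [extM, esum, Finset.mem_compl.mp i.2]

lemma reindex_esum_extM_compl (I : Finset (Fin r)) (B : Matrix ↥(Iᶜ) ↥(Iᶜ) ℝ) :
    reindex (esum I).symm (esum I).symm (extM Iᶜ B) = fromBlocks 0 0 0 B := by
  ext (i | i) (j | j)
  · simp [extM, esum, i.2]
  · simp [extM, esum, j.2, Finset.mem_compl.mp j.2]
  · simp [extM, esum, Finset.mem_compl.mp i.2, j.2]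
  · simp [extM, esum, Finset.mem_compl.mp i.2, Finset.mem_compl.mp j.2]

lemma extM_smul {r : ℕ} (K : Finset (Fin r)) (c : ℝ) (B : Matrix K K ℝ) :
    extM K (c • B) = c • extM K B := by
  ext i j
  by_cases hi : i ∈ K
  · by_cases hj : j ∈ K <;> simp [extM, hi, hj]
  · simp [extM, hi]

lemma adj_eq_det_smul_inv {n : Type*} [Fintype n] [DecidableEq n]
    (A : Matrix n n ℝ) (h : IsUnit A.det) : A.adjugate = A.det • A⁻¹ := by
  rw [Matrix.inv_def, smul_smul, Ring.inverse_eq_inv',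
    mul_inv_cancel₀ h.ne_zero, one_smul]

theorem extension_lemma_aux (r : ℕ) (M : Matrix (Fin r) (Fin r) ℝ)
    (hM : IsUnit M.det) (I : Finset (Fin r)) (hA : IsUnit (restr I M).det) :
    (restr I M).det • M⁻¹ - extM I (restr I M).adjugate
      = (M.det ^ (-((r : ℤ) - (I.card : ℤ) - 1))) •
          (M.adjugate * extM Iᶜ (restr Iᶜ M.adjugate).adjugate * M⁻¹) := by
  have hcard : I.card + Iᶜ.card = r := by
    simpa using I.card_add_card_compl
  by_cases hu : I = Finset.univ
  · subst hu
    have hIc : (Finset.univ : Finset (Fin r))ᶜ = ∅ := by simp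
    have hext0 : ∀ B : Matrix ↥((Finset.univ : Finset (Fin r))ᶜ)
        ↥((Finset.univ : Finset (Fin r))ᶜ) ℝ, extM _ B = 0 := by
      intro B; ext i j
      have hi : i ∉ (Finset.univ : Finset (Fin r))ᶜ := by simp
      simp [extM, hi]
    rw [hext0, Matrix.mul_zero, Matrix.zero_mul, smul_zero]
    set e0 : ↥(Finset.univ : Finset (Fin r)) ≃ Fin r :=
      ⟨Subtype.val, fun x => ⟨x, Finset.mem_univ x⟩, fun x => rfl, fun x => rfl⟩ with he0
    have h1 : restr Finset.univ M = M.submatrix e0 e0 := rfl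
    have hdet : (restr Finset.univ M).det = M.det := by
      rw [h1, det_submatrix_equiv_self]
    have hadj : extM Finset.univ (restr Finset.univ M).adjugate = M.adjugate := by
      rw [h1, adjugate_submatrix_equiv_self]
      ext i j
      simp [extM]
      rfl
    rw [hdet, hadj, adj_eq_det_smul_inv _ hM, sub_self]
  · -- main case
    have hIc : (Iᶜ : Finset (Fin r)).Nonempty := by
      rw [Finset.nonempty_iff_ne_empty, Ne, Finset.compl_eq_empty_iff]
      exact hu
    have hb : 1 ≤ Iᶜ.card := Finset.card_pos.mpr hIc
    set A := restr I M with hAdef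
    set S := restr Iᶜ M⁻¹ with hSdef
    have hrc : restr Iᶜ M.adjugate = M.det • S := by
      rw [adj_eq_det_smul_inv _ hM]
      rfl
    have hadjsmul : (restr Iᶜ M.adjugate).adjugate
        = M.det ^ (Iᶜ.card - 1) • S.adjugate := by
      rw [hrc, adjugate_smul, Fintype.card_coe]
    have hRHS : (M.det ^ (-((r : ℤ) - (I.card : ℤ) - 1))) •
          (M.adjugate * extM Iᶜ (restr Iᶜ M.adjugate).adjugate * M⁻¹)
        = M.adjugate * extM Iᶜ S.adjugate * M⁻¹ := by
      rw [hadjsmul, extM_smul, Matrix.mul_smul, Matrix.smul_mul, smul_smul,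
        ← zpow_natCast M.det, ← zpow_add₀ hM.ne_zero]
      have : (-((r : ℤ) - (I.card : ℤ) - 1)) + ((Iᶜ.card - 1 : ℕ) : ℤ) = 0 := by
        push_cast [Nat.cast_sub hb]
        omega
      rw [this, zpow_zero, one_smul]
    rw [hRHS]
    -- cancellation setup
    have cancel : ∀ X Y : Matrix (Fin r) (Fin r) ℝ, M * X * M = M * Y * M → X = Y := by
      intro X Y h
      have h1 := congrArg (fun Z => M⁻¹ * Z) h
      simp only [← Matrix.mul_assoc, Matrix.nonsing_inv_mul _ hM, Matrix.one_mul] at h1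
      have h2 := congrArg (fun Z => Z * M⁻¹) h1
      simp only [Matrix.mul_assoc, Matrix.mul_nonsing_inv _ hM, Matrix.mul_one] at h2
      exact h2
    apply cancel
    have hL : M * (A.det • M⁻¹ - extM I A.adjugate) * M
        = A.det • M - M * extM I A.adjugate * M := by
      rw [Matrix.mul_sub, Matrix.sub_mul, Matrix.mul_smul, Matrix.smul_mul,
        Matrix.mul_nonsing_inv _ hM, Matrix.one_mul]
    have hR : M * (M.adjugate * extM Iᶜ S.adjugate * M⁻¹) * M
        = M.det • extM Iᶜ S.adjugate := by
      rw [← Matrix.mul_assoc, ← Matrix.mul_assoc, Matrix.mul_adjugate,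
        Matrix.smul_mul, Matrix.one_mul, Matrix.mul_assoc,
        Matrix.nonsing_inv_mul _ hM, Matrix.mul_one]
    rw [hL, hR]
    -- transport to block world
    set e := esum I with he
    apply (Matrix.reindex e.symm e.symm).injective
    have hWeq := reindex_esum M I
    set Bm := M.submatrix (Subtype.val : ↥I → Fin r) (Subtype.val : ↥(Iᶜ) → Fin r)
    set Cm := M.submatrix (Subtype.val : ↥(Iᶜ) → Fin r) (Subtype.val : ↥I → Fin r)
    set D := restr Iᶜ M
    have hW : IsUnit (fromBlocks A Bm Cm D).det := by
      rw [← hWeq, det_reindex_self]; exact hM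
    have hkey := block_key A Bm Cm D hA hW
    have hWinv : (fromBlocks A Bm Cm D)⁻¹ = reindex e.symm e.symm M⁻¹ := by
      rw [← hWeq, Matrix.inv_reindex]
    have hT22 : ((reindex e.symm e.symm) M⁻¹).toBlocks₂₂ = S := rfl
    rw [hWinv] at hkey
    have hmul : ∀ X Y : Matrix (Fin r) (Fin r) ℝ,
        reindex e.symm e.symm (X * Y)
          = reindex e.symm e.symm X * reindex e.symm e.symm Y := by
      intro X Y
      simp only [reindex_apply, Equiv.symm_symm]
      rw [Matrix.submatrix_mul_equiv]
    have hdetW : (fromBlocks A Bm Cm D).det = M.det := by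
      rw [← hWeq, det_reindex_self]
    -- rewrite goal
    show reindex e.symm e.symm (A.det • M - M * extM I A.adjugate * M)
        = reindex e.symm e.symm (M.det • extM Iᶜ S.adjugate)
    have hsub : ∀ X Y : Matrix (Fin r) (Fin r) ℝ,
        reindex e.symm e.symm (X - Y)
          = reindex e.symm e.symm X - reindex e.symm e.symm Y := fun _ _ => rfl
    have hsmul : ∀ (c : ℝ) (X : Matrix (Fin r) (Fin r) ℝ),
        reindex e.symm e.symm (c • X) = c • reindex e.symm e.symm X := fun _ _ => rfl
    rw [hsub, hsmul, hsmul, hmul, hmul, hWeq, reindex_esum_extM,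
      reindex_esum_extM_compl]
    calc A.det • fromBlocks A Bm Cm D
          - fromBlocks A Bm Cm D * fromBlocks A.adjugate 0 0 0 * fromBlocks A Bm Cm D
        = (fromBlocks A Bm Cm D).det •
            fromBlocks 0 0 0 (((reindex e.symm e.symm M⁻¹).toBlocks₂₂).adjugate) := hkey
      _ = M.det • fromBlocks 0 0 0 S.adjugate := by rw [hdetW, hT22]

lemma eval_det_addsmul {n : Type*} [Fintype n] [DecidableEq n]
    (A : Matrix n n ℝ) (t : ℝ) :
    ((-A).charpoly).eval t = (A + t • 1).det := by
  rw [Matrix.charpoly, ← Polynomial.coe_evalRingHom, RingHom.map_det]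
  congr 1
  ext i j
  by_cases h : i = j
  · subst h
    simp [Matrix.charmatrix_apply_eq, Matrix.one_apply, add_comm]
  · simp [Matrix.charmatrix_apply_ne _ _ _ h, Matrix.one_apply_ne h]

lemma continuous_restr {r : ℕ} (K : Finset (Fin r)) :
    Continuous fun X : Matrix (Fin r) (Fin r) ℝ => restr K X :=
  Continuous.matrix_submatrix continuous_id _ _

lemma continuous_extM {r : ℕ} (K : Finset (Fin r)) :
    Continuous fun X : Matrix K K ℝ => extM K X := by
  apply continuous_matrix
  intro i j
  unfold extM
  by_cases hi : i ∈ K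
  · by_cases hj : j ∈ K
    · simp only [dif_pos hi, dif_pos hj]
      exact (continuous_apply _).comp (continuous_apply _)
    · simp only [dif_pos hi, dif_neg hj]; exact continuous_const
  · simp only [dif_neg hi]; exact continuous_const

/-- **Extension Lemma.** For invertible `M ∈ ℝ^{r×r}`, `I ⊆ [r]` with `|I| = a`,
`J = [r] \ I` and `N = adj M`:
`(det [M]_I) M⁻¹ − Ext_I(adj [M]_I) = (det M)^{-(r-a-1)} N · Ext_J(adj [N]_J) · M⁻¹`. -/
theorem extension_lemma (r : ℕ) (M : Matrix (Fin r) (Fin r) ℝ)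
    (hM : IsUnit M.det) (I : Finset (Fin r)) :
    (restr I M).det • M⁻¹ - extM I (restr I M).adjugate
      = (M.det ^ (-((r : ℤ) - (I.card : ℤ) - 1))) •
          (M.adjugate * extM Iᶜ (restr Iᶜ M.adjugate).adjugate * M⁻¹) := by
  classical
  have hMne : M.det ≠ 0 := hM.ne_zero
  set z : ℤ := -((r : ℤ) - (I.card : ℤ) - 1) with hz
  set F : Matrix (Fin r) (Fin r) ℝ → Matrix (Fin r) (Fin r) ℝ :=
    fun X => (restr I X).det • ((X.det)⁻¹ • X.adjugate) - extM I (restr I X).adjugate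
    with hF
  set G : Matrix (Fin r) (Fin r) ℝ → Matrix (Fin r) (Fin r) ℝ :=
    fun X => (X.det ^ z) •
      (X.adjugate * extM Iᶜ (restr Iᶜ X.adjugate).adjugate * ((X.det)⁻¹ • X.adjugate))
    with hG
  have hinv : ∀ X : Matrix (Fin r) (Fin r) ℝ, X⁻¹ = (X.det)⁻¹ • X.adjugate := by
    intro X; rw [Matrix.inv_def, Ring.inverse_eq_inv']
  have hFG : ∀ X : Matrix (Fin r) (Fin r) ℝ, X.det ≠ 0 → (restr I X).det ≠ 0 →
      F X = G X := by
    intro X h1 h2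
    have := extension_lemma_aux r X (isUnit_iff_ne_zero.mpr h1) I (isUnit_iff_ne_zero.mpr h2)
    rw [hinv X] at this
    exact this
  -- the perturbation
  set φ : ℝ → Matrix (Fin r) (Fin r) ℝ := fun t => M + t • extM I 1 with hφ
  have hφc : Continuous φ := by
    exact continuous_const.add (continuous_id.smul continuous_const)
  have hφ0 : φ 0 = M := by simp [hφ]
  have hrestrφ : ∀ t, restr I (φ t) = restr I M + t • 1 := by
    intro t
    ext i j
    simp only [hφ, restr, Matrix.submatrix_apply, Matrix.add_apply, Matrix.smul_apply,
      smul_eq_mul]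
    congr 1
    rcases i with ⟨i, hi⟩; rcases j with ⟨j, hj⟩
    simp [extM, hi, hj, Matrix.one_apply, Subtype.ext_iff]
  set q : Polynomial ℝ := (-(restr I M)).charpoly with hq
  have hq0 : q ≠ 0 := (Matrix.charpoly_monic _).ne_zero
  have hqev : ∀ t, q.eval t = (restr I (φ t)).det := by
    intro t; rw [hrestrφ t, hq, eval_det_addsmul]
  -- the good set
  set Sset : Set ℝ := {t | (φ t).det ≠ 0 ∧ (restr I (φ t)).det ≠ 0} with hSset
  have hdetc : Continuous fun X : Matrix (Fin r) (Fin r) ℝ => X.det :=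
    continuous_id.matrix_det
  have hclos : (0 : ℝ) ∈ closure Sset := by
    rw [Metric.mem_closure_iff]
    intro ε hε
    have hopen : IsOpen {t : ℝ | (φ t).det ≠ 0} :=
      isOpen_ne.preimage (hdetc.comp hφc)
    have h0mem : (0 : ℝ) ∈ {t : ℝ | (φ t).det ≠ 0} := by
      simpa [hφ0] using hMne
    obtain ⟨δ, hδ, hball⟩ := Metric.isOpen_iff.mp hopen 0 h0mem
    have hIoo : (Set.Ioo (0 : ℝ) (min δ ε)).Infinite :=
      Set.Ioo_infinite (by positivity)
    have hfin : {t : ℝ | Polynomial.IsRoot q t}.Finite :=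
      Polynomial.finite_setOf_isRoot hq0
    obtain ⟨t, ht⟩ := (hIoo.diff hfin).nonempty
    rcases ht with ⟨⟨ht0, htm⟩, htroot⟩
    refine ⟨t, ⟨?_, ?_⟩, ?_⟩
    · apply hball
      rw [Metric.mem_ball, Real.dist_eq, sub_zero, abs_of_pos ht0]
      exact lt_of_lt_of_le htm (min_le_left _ _)
    · rw [← hqev]
      simpa [Polynomial.IsRoot] using htroot
    · rw [Real.dist_eq, zero_sub, abs_neg, abs_of_pos ht0]
      exact lt_of_lt_of_le htm (min_le_right _ _)
  have hNeBot : (nhdsWithin (0 : ℝ) Sset).NeBot :=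
    mem_closure_iff_nhdsWithin_neBot.mp hclos
  -- continuity of F and G at M
  have hadjc : Continuous fun X : Matrix (Fin r) (Fin r) ℝ => X.adjugate :=
    continuous_id.matrix_adjugate
  have hFc : ContinuousAt F M := by
    apply ContinuousAt.sub
    · apply ContinuousAt.fun_smul
      · exact ((continuous_restr I).matrix_det).continuousAt
      · exact ContinuousAt.fun_smul (hdetc.continuousAt.inv₀ hMne) hadjc.continuousAt
    · exact ((continuous_extM I).comp ((continuous_restr I).matrix_adjugate)).continuousAt
  have hGc : ContinuousAt G M := by
    apply ContinuousAt.fun_smul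
    · exact ContinuousAt.comp (continuousAt_zpow₀ _ _ (Or.inl hMne)) hdetc.continuousAt
    · apply ContinuousAt.fun_mul
      · apply ContinuousAt.fun_mul hadjc.continuousAt
        exact ((continuous_extM Iᶜ).comp
          ((continuous_restr Iᶜ).comp hadjc).matrix_adjugate).continuousAt
      · exact ContinuousAt.fun_smul (hdetc.continuousAt.inv₀ hMne) hadjc.continuousAt
  -- limits
  have hφt : Filter.Tendsto φ (nhdsWithin (0 : ℝ) Sset) (nhds M) := by
    rw [← hφ0]
    exact (hφc.continuousAt.tendsto).mono_left nhdsWithin_le_nhds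
  have h1 : Filter.Tendsto (F ∘ φ) (nhdsWithin (0 : ℝ) Sset) (nhds (F M)) :=
    (hFc.tendsto).comp hφt
  have h2 : Filter.Tendsto (G ∘ φ) (nhdsWithin (0 : ℝ) Sset) (nhds (G M)) :=
    (hGc.tendsto).comp hφt
  have hEq : F ∘ φ =ᶠ[nhdsWithin (0 : ℝ) Sset] G ∘ φ := by
    filter_upwards [self_mem_nhdsWithin] with t ht
    exact hFG (φ t) ht.1 ht.2
  have hmain : F M = G M :=
    tendsto_nhds_unique h1 (h2.congr' hEq.symm)
  simp only [hF, hG] at hmain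
  rw [hinv M, hmain, ← hinv M]
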